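/- Let (K,≤,') be a finite representable Kleene poset whose cardinality is odd. Then ' has exactly one fixed point a ∈ K, and there exists a subset A ⊆ K with a ∈ A and 2·|A| ≤ |K| + 1 such that P_a(A), computed within the subposet (A,≤) of K, is isomorphic to (K,≤,'): there is a bijection from P_a(A) to K which together with its inverse is order-preserving (with respect to the twist order ⊑ on P_a(A) and ≤ on K) and which maps (y,x) to the '-image of the image of (x,y). -/

import Mathlib

universe u

/-- `SetLE B C` means every element of `B` is below every element of `C`. -/
def SetLE {α : Type*} [PartialOrder α] (B C : Set α) : Prop := ∀ x ∈ B, ∀ y ∈ C, x ≤ y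

/-- `PS S` is the set of pairs `(x,y)` with `L({x,y}) ≤ S ≤ U({x,y})`. -/
def PS {α : Type*} [PartialOrder α] (S : Set α) : Set (α × α) :=
  {p | SetLE (lowerBounds {p.1, p.2}) S ∧ SetLE S (upperBounds {p.1, p.2})}

/-- The twist order on `α × α`. -/
def Tle {α : Type*} [PartialOrder α] (p q : α × α) : Prop := p.1 ≤ q.1 ∧ q.2 ≤ p.2

/-- A poset is distributive if `L(U(x,y),z) = LU(L(x,z),L(y,z))` for all `x,y,z`. -/
def DistribPoset (α : Type*) [PartialOrder α] : Prop :=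
  ∀ x y z : α, lowerBounds (upperBounds {x, y} ∪ {z}) =
    lowerBounds (upperBounds (lowerBounds {x, z} ∪ lowerBounds {y, z}))

/-- A poset `K` with involution `invo` is representable if there are a poset `A` and a
nonempty `S ⊆ A` and a bijection from `P_S(A)` onto `K` which together with its inverse
is order-preserving and which commutes with the involutions. -/
def IsRepresentable {K : Type u} [PartialOrder K] (invo : K → K) : Prop :=
  ∃ (A : Type u) (instA : PartialOrder A) (S : Set A), S.Nonempty ∧
    ∃ F : A × A → K, Set.BijOn F (@PS A instA S) Set.univ ∧
      (∀ p ∈ @PS A instA S, ∀ q ∈ @PS A instA S, (@Tle A instA p q ↔ F p ≤ F q)) ∧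
      (∀ p ∈ @PS A instA S, F (p.2, p.1) = invo (F p))

/-- A finite representable Kleene poset `K` of odd cardinality: the involution has
exactly one fixed point `a`, and there is a subset `A ⊆ K` containing `a` with
`|A| < |K|/2 + 1` such that `P_a(A)`, computed within the subposet `A`, is
isomorphic to `K`. -/
lemma PS_swap {α : Type*} [PartialOrder α] {S : Set α} {p : α × α} (h : p ∈ PS S) :
    (p.2, p.1) ∈ PS S := by
  have h' : SetLE (lowerBounds {p.1, p.2}) S ∧ SetLE S (upperBounds {p.1, p.2}) := h
  have e : ({p.2, p.1} : Set α) = {p.1, p.2} := Set.pair_comm _ _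
  show SetLE (lowerBounds {p.2, p.1}) S ∧ SetLE S (upperBounds {p.2, p.1})
  rw [e]
  exact h'

theorem stmt17 {K : Type u} [PartialOrder K] [Fintype K] (invo : K → K)
    (hanti : ∀ x y : K, x ≤ y → invo y ≤ invo x) (hinv : ∀ x : K, invo (invo x) = x)
    (hnorm : ∀ x y : K, SetLE (lowerBounds {x, invo x}) (upperBounds {y, invo y}))
    (hdist : DistribPoset K)
    (hrep : IsRepresentable invo)
    (hodd : Odd (Fintype.card K)) :
    ∃ a : K, invo a = a ∧ (∀ b : K, invo b = b → b = a) ∧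
      ∃ (A : Set K) (haA : a ∈ A), 2 * A.ncard ≤ Fintype.card K + 1 ∧
        ∃ F : ↥A × ↥A → K,
          Set.BijOn F (PS ({⟨a, haA⟩} : Set ↥A)) Set.univ ∧
          (∀ p ∈ PS ({⟨a, haA⟩} : Set ↥A), ∀ q ∈ PS ({⟨a, haA⟩} : Set ↥A),
            (Tle p q ↔ F p ≤ F q)) ∧
          (∀ p ∈ PS ({⟨a, haA⟩} : Set ↥A), F (p.2, p.1) = invo (F p)) := by
  classical
  have hinvol : Function.Involutive invo := hinv
  -- existence of a fixed point
  obtain ⟨a, ha⟩ : ∃ a : K, invo a = a := by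
    have h2 : ¬ (2 ∣ Fintype.card K) := by
      rcases hodd with ⟨k, hk⟩; omega
    haveI : Fact (Nat.Prime 2) := ⟨Nat.prime_two⟩
    have hσ : (hinvol.toPerm invo) ^ 2 ^ 1 = 1 := by
      ext x; simp [pow_succ, hinv x]
    obtain ⟨a, ha⟩ := Equiv.Perm.exists_fixed_point_of_prime h2 hσ
    exact ⟨a, by simpa using ha⟩
  -- uniqueness of the fixed point
  have huniq : ∀ b : K, invo b = b → b = a := by
    intro b hb
    have hmem : ∀ z : K, invo z = z → z ∈ lowerBounds ({z, invo z} : Set K) := by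
      intro z hz x hx
      rcases hx with rfl | hx
      · exact le_refl _
      · rw [Set.mem_singleton_iff] at hx; subst hx; rw [hz]
    have hmem' : ∀ z : K, invo z = z → z ∈ upperBounds ({z, invo z} : Set K) := by
      intro z hz x hx
      rcases hx with rfl | hx
      · exact le_refl _
      · rw [Set.mem_singleton_iff] at hx; subst hx; rw [hz]
    exact le_antisymm (hnorm b a b (hmem b hb) a (hmem' a ha))
      (hnorm a b a (hmem a ha) b (hmem' b hb))
  refine ⟨a, ha, huniq, ?_⟩
  -- unpack the representation
  obtain ⟨B, instB, S, hSne, G, hGbij, hGord, hGinv⟩ := hrep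
  -- find the pair representing a
  obtain ⟨p0, hp0PS, hp0G⟩ := hGbij.2.2 (Set.mem_univ a)
  have hswapPS : (p0.2, p0.1) ∈ PS S := PS_swap hp0PS
  have hGswap : G (p0.2, p0.1) = G p0 := by
    rw [hGinv p0 hp0PS, hp0G]; exact ha
  have heq : (p0.2, p0.1) = p0 := hGbij.2.1 hswapPS hp0PS hGswap
  set c := p0.1 with hc
  have hp0e : p0 = (c, c) := by
    have : p0.2 = p0.1 := congrArg Prod.fst heq
    exact Prod.ext rfl this
  have hcc : ((c, c) : B × B) ∈ PS S := hp0e ▸ hp0PS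
  have hGcc : G (c, c) = a := hp0e ▸ hp0G
  -- S = {c}
  have hSc : S = {c} := by
    have h1 : ∀ s ∈ S, c ≤ s := by
      intro s hs
      exact hcc.1 c (fun x hx => by
        rcases hx with rfl | hx
        · exact le_refl _
        · rw [Set.mem_singleton_iff] at hx; subst hx; exact le_refl _) s hs
    have h2 : ∀ s ∈ S, s ≤ c := by
      intro s hs
      exact hcc.2 s hs c (fun x hx => by
        rcases hx with rfl | hx
        · exact le_refl _
        · rw [Set.mem_singleton_iff] at hx; subst hx; exact le_refl _)
    obtain ⟨s0, hs0⟩ := hSne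
    have : s0 = c := le_antisymm (h2 s0 hs0) (h1 s0 hs0)
    apply Set.eq_singleton_iff_unique_mem.mpr
    exact ⟨this ▸ hs0, fun s hs => le_antisymm (h2 s hs) (h1 s hs)⟩
  subst hSc
  -- every pair (p, c) is in PS {c}
  have hpc : ∀ p : B, ((p, c) : B × B) ∈ PS ({c} : Set B) := by
    intro p
    constructor
    · intro t ht s hs
      rw [Set.mem_singleton_iff] at hs; subst hs
      exact ht (Set.mem_insert_of_mem p rfl)
    · intro s hs u hu
      rw [Set.mem_singleton_iff] at hs; subst hs
      exact hu (Set.mem_insert_of_mem p rfl)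
  have hcp : ∀ p : B, ((c, p) : B × B) ∈ PS ({c} : Set B) := fun p => PS_swap (hpc p)
  -- facts about G on such pairs
  have hGinjc : ∀ p q : B, G (p, c) = G (q, c) → p = q := by
    intro p q h
    have := hGbij.2.1 (hpc p) (hpc q) h
    exact congrArg Prod.fst this
  have hordc : ∀ p q : B, G (p, c) ≤ G (q, c) ↔ p ≤ q := by
    intro p q
    rw [← hGord (p, c) (hpc p) (q, c) (hpc q)]
    exact ⟨fun h => h.1, fun h => ⟨h, le_refl c⟩⟩
  have hinvo_pc : ∀ p : B, invo (G (p, c)) = G (c, p) :=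
    fun p => (hGinv (p, c) (hpc p)).symm
  -- the subset A
  have haA : a ∈ Set.range (fun p : B => G (p, c)) := ⟨c, hGcc⟩
  refine ⟨Set.range (fun p : B => G (p, c)), haA, ?_, ?_⟩
  · -- cardinality bound
    set AK := Set.range (fun p : B => G (p, c)) with hAK
    set AK' := Set.range (fun p : B => G (c, p)) with hAK'
    have himg : invo '' AK = AK' := by
      ext k
      constructor
      · rintro ⟨_, ⟨p, rfl⟩, rfl⟩; exact ⟨p, (hinvo_pc p).symm⟩
      · rintro ⟨p, rfl⟩; exact ⟨G (p, c), ⟨p, rfl⟩, hinvo_pc p⟩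
    have hcard' : AK'.ncard = AK.ncard := by
      rw [← himg]; exact Set.ncard_image_of_injective AK hinvol.injective
    have hinter : AK ∩ AK' = {a} := by
      apply Set.eq_singleton_iff_unique_mem.mpr
      constructor
      · exact ⟨⟨c, hGcc⟩, ⟨c, hGcc⟩⟩
      · rintro k ⟨⟨p, hp⟩, ⟨q, hq⟩⟩
        have hp2 : G (p, c) = k := hp
        have hq2 : G (c, q) = k := hq
        have : G (p, c) = G (c, q) := by rw [hp2, hq2]
        have hpq := hGbij.2.1 (hpc p) (hcp q) this
        have hpceq : p = c := congrArg Prod.fst hpq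
        rw [← hp2, hpceq]; exact hGcc
    have hfin : (AK ∪ AK').ncard + (AK ∩ AK').ncard = AK.ncard + AK'.ncard :=
      Set.ncard_union_add_ncard_inter AK AK' (Set.toFinite _) (Set.toFinite _)
    have hle : (AK ∪ AK').ncard ≤ Fintype.card K := by
      have h := Set.ncard_le_ncard (Set.subset_univ (AK ∪ AK')) (Set.toFinite _)
      rwa [Set.ncard_univ, Nat.card_eq_fintype_card] at h
    rw [hinter, Set.ncard_singleton] at hfin
    omega
  · -- the isomorphism
    set AK := Set.range (fun p : B => G (p, c)) with hAK
    have hψex : ∀ u : ↥AK, ∃ p : B, G (p, c) = ↑u := fun u => u.2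
    choose ψ hψ using hψex
    have hψG : ∀ (p : B) (h : G (p, c) ∈ AK), ψ ⟨G (p, c), h⟩ = p := by
      intro p h
      exact hGinjc _ _ (hψ ⟨G (p, c), h⟩)
    have hule : ∀ u v : ↥AK, u ≤ v ↔ ψ u ≤ ψ v := by
      intro u v
      rw [← Subtype.coe_le_coe, ← hψ u, ← hψ v]
      exact hordc _ _
    set aa : ↥AK := ⟨a, haA⟩ with haa
    have hψa : ψ aa = c := by
      apply hGinjc
      rw [hψ aa, hGcc]
    -- correspondence of PS membership
    have hPSiff : ∀ u v : ↥AK,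
        ((u, v) ∈ PS ({aa} : Set ↥AK)) ↔ ((ψ u, ψ v) ∈ PS ({c} : Set B)) := by
      intro u v
      constructor
      · rintro ⟨h1, h2⟩
        constructor
        · intro t ht s hs
          rw [Set.mem_singleton_iff] at hs; subst hs
          have hw : (⟨G (t, c), Set.mem_range_self t⟩ : ↥AK) ∈ lowerBounds ({u, v} : Set ↥AK) := by
            intro z hz
            rcases hz with rfl | hz
            · rw [hule, hψG]; exact ht (Set.mem_insert _ _)
            · rw [Set.mem_singleton_iff] at hz; subst hz
              rw [hule, hψG]; exact ht (Set.mem_insert_of_mem _ rfl)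
          have := h1 _ hw aa rfl
          rw [hule, hψG, hψa] at this
          exact this
        · intro s hs t ht
          rw [Set.mem_singleton_iff] at hs; subst hs
          have hw : (⟨G (t, c), Set.mem_range_self t⟩ : ↥AK) ∈ upperBounds ({u, v} : Set ↥AK) := by
            intro z hz
            rcases hz with rfl | hz
            · rw [hule, hψG]; exact ht (Set.mem_insert _ _)
            · rw [Set.mem_singleton_iff] at hz; subst hz
              rw [hule, hψG]; exact ht (Set.mem_insert_of_mem _ rfl)
          have := h2 aa rfl _ hw
          rw [hule, hψa, hψG] at this
          exact this
      · rintro ⟨h1, h2⟩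
        constructor
        · intro w hw s hs
          rw [Set.mem_singleton_iff] at hs; subst hs
          have h1w : ψ w ∈ lowerBounds ({ψ u, ψ v} : Set B) := by
            intro z hz
            rcases hz with rfl | hz
            · exact (hule w u).mp (hw (Set.mem_insert _ _))
            · rw [Set.mem_singleton_iff] at hz; subst hz
              exact (hule w v).mp (hw (Set.mem_insert_of_mem _ rfl))
          have := h1 _ h1w c rfl
          rw [hule, hψa]
          exact this
        · intro s hs w hw
          rw [Set.mem_singleton_iff] at hs; subst hs
          have h2w : ψ w ∈ upperBounds ({ψ u, ψ v} : Set B) := by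
            intro z hz
            rcases hz with rfl | hz
            · exact (hule u w).mp (hw (Set.mem_insert _ _))
            · rw [Set.mem_singleton_iff] at hz; subst hz
              exact (hule v w).mp (hw (Set.mem_insert_of_mem _ rfl))
          have := h2 c rfl _ h2w
          rw [hule, hψa]
          exact this
    refine ⟨fun w => G (ψ w.1, ψ w.2), ⟨?_, ?_, ?_⟩, ?_, ?_⟩
    · intro p _; exact Set.mem_univ _
    · -- injective on PS
      intro p hp q hq hFpq
      have hp' := (hPSiff p.1 p.2).mp hp
      have hq' := (hPSiff q.1 q.2).mp hq
      have := hGbij.2.1 hp' hq' hFpq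
      have h1 : ψ p.1 = ψ q.1 := congrArg Prod.fst this
      have h2 : ψ p.2 = ψ q.2 := congrArg Prod.snd this
      have e1 : p.1 = q.1 := by
        apply Subtype.ext
        rw [← hψ p.1, ← hψ q.1, h1]
      have e2 : p.2 = q.2 := by
        apply Subtype.ext
        rw [← hψ p.2, ← hψ q.2, h2]
      exact Prod.ext e1 e2
    · -- surjective onto K
      intro k _
      obtain ⟨pq, hpqPS, hpqG⟩ := hGbij.2.2 (Set.mem_univ k)
      refine ⟨(⟨G (pq.1, c), Set.mem_range_self pq.1⟩, ⟨G (pq.2, c), Set.mem_range_self pq.2⟩), ?_, ?_⟩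
      · apply (hPSiff _ _).mpr
        rw [hψG, hψG]
        exact (Prod.mk.eta (p := pq)) ▸ hpqPS
      · show G (ψ _, ψ _) = k
        rw [hψG, hψG]
        rw [← hpqG]
    · -- order
      intro p hp q hq
      have hp' := (hPSiff p.1 p.2).mp hp
      have hq' := (hPSiff q.1 q.2).mp hq
      have := hGord _ hp' _ hq'
      rw [← this]
      constructor
      · rintro ⟨h1, h2⟩
        exact ⟨(hule _ _).mp h1, (hule _ _).mp h2⟩
      · rintro ⟨h1, h2⟩
        exact ⟨(hule _ _).mpr h1, (hule _ _).mpr h2⟩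
    · -- involution
      intro p hp
      have hp' := (hPSiff p.1 p.2).mp hp
      exact hGinv _ hp'
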